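/- Let V : ℝ^d → ℝ be convex and differentiable, with e^{−V} Lebesgue-integrable. If x ≠ y satisfy (x−y)·(∇V(x)−∇V(y)) = 0, then ∇V(x) = ∇V(y), and V is affine on the segment [x,y]. -/

import Mathlib

open MeasureTheory Real

section aux

variable {d : ℕ}

local notation "⟪" a ", " b "⟫" => @inner ℝ _ _ a b

lemma inner_gradient_eq_fderiv (V : EuclideanSpace ℝ (Fin d) → ℝ)
    (p v : EuclideanSpace ℝ (Fin d)) :
    ⟪gradient V p, v⟫ = fderiv ℝ V p v := by
  rw [gradient, InnerProductSpace.toDual_symm_apply]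

lemma grad_ineq (V : EuclideanSpace ℝ (Fin d) → ℝ)
    (hconv : ConvexOn ℝ Set.univ V) (hdiff : Differentiable ℝ V)
    (p w : EuclideanSpace ℝ (Fin d)) :
    V p + ⟪gradient V p, w - p⟫ ≤ V w := by
  set L : ℝ →ᵃ[ℝ] EuclideanSpace ℝ (Fin d) := AffineMap.lineMap p w with hL
  have hLt : ∀ t : ℝ, L t = p + t • (w - p) := by
    intro t
    simp [hL, AffineMap.lineMap_apply, add_comm]
  have hg : ConvexOn ℝ Set.univ (V ∘ L) := by
    have := hconv.comp_affineMap L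
    simpa using this
  have hderivL : ∀ t : ℝ, HasDerivAt L (w - p) t := by
    intro t
    have : HasDerivAt (fun t : ℝ => p + t • (w - p)) (w - p) t := by
      simpa using ((hasDerivAt_id t).smul_const (w - p)).const_add p
    exact this.congr_of_eventuallyEq (Filter.Eventually.of_forall fun s => hLt s)
  have hd0 : HasDerivAt (V ∘ L) (fderiv ℝ V p (w - p)) 0 := by
    have h1 : HasFDerivAt V (fderiv ℝ V p) (L 0) := by
      rw [show L 0 = p by simp [hLt]]
      exact (hdiff p).hasFDerivAt
    exact h1.comp_hasDerivAt 0 (hderivL 0)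
  have hslope := hg.le_slope_of_hasDerivAt (Set.mem_univ 0) (Set.mem_univ 1)
    one_pos hd0
  have hval : slope (V ∘ L) 0 1 = V w - V p := by
    simp [slope, hLt]
  rw [hval] at hslope
  rw [inner_gradient_eq_fderiv]
  linarith

end aux

theorem convex_gradient_degenerate {d : ℕ} (V : EuclideanSpace ℝ (Fin d) → ℝ)
    (hconv : ConvexOn ℝ Set.univ V) (hdiff : Differentiable ℝ V)
    (hint : Integrable fun x => Real.exp (-V x))
    (x y : EuclideanSpace ℝ (Fin d)) (hxy : x ≠ y)
    (h0 : (inner ℝ (x - y) (gradient V x - gradient V y) : ℝ) = 0) :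
    gradient V x = gradient V y ∧
      ∀ t : ℝ, t ∈ Set.Icc (0 : ℝ) 1 →
        V (x + t • (y - x)) = V x + t * (V y - V x) := by
  have h1 := grad_ineq V hconv hdiff x y
  have h2 := grad_ineq V hconv hdiff y x
  have hsum : (inner ℝ (gradient V x) (y - x) : ℝ) + inner ℝ (gradient V y) (x - y) = 0 := by
    have : (inner ℝ (x - y) (gradient V x) : ℝ) - inner ℝ (x - y) (gradient V y) = 0 := by
      rw [← inner_sub_right]; exact h0
    have e1 : (inner ℝ (gradient V x) (y - x) : ℝ) = - inner ℝ (x - y) (gradient V x) := by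
      rw [real_inner_comm, ← inner_neg_left]; simp
    have e2 : (inner ℝ (gradient V y) (x - y) : ℝ) = inner ℝ (x - y) (gradient V y) := by
      rw [real_inner_comm]
    rw [e1, e2]; linarith
  have hkey : V y = V x + inner ℝ (gradient V x) (y - x) := by linarith
  -- gradient equality via minimization
  have hmin : ∀ w, V x - inner ℝ (gradient V x) x ≤ V w - (inner ℝ (gradient V x) w : ℝ) := by
    intro w
    have := grad_ineq V hconv hdiff x w
    rw [inner_sub_right] at this
    linarith
  set f : EuclideanSpace ℝ (Fin d) → ℝ :=
    fun w => V w - inner ℝ (gradient V x) w with hf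
  have hfy : IsLocalMin f y := by
    have hglobal : ∀ w, f y ≤ f w := by
      intro w
      have hy' : f y = V x - inner ℝ (gradient V x) x := by
        simp only [hf]
        rw [hkey, inner_sub_right]
        ring
      rw [hy']
      exact hmin w
    exact Filter.Eventually.of_forall hglobal
  have hfderiv : fderiv ℝ f y = 0 := hfy.fderiv_eq_zero
  have hfd : fderiv ℝ f y = fderiv ℝ V y - innerSL ℝ (gradient V x) := by
    have hVd : DifferentiableAt ℝ V y := hdiff y
    have hLd : DifferentiableAt ℝ (fun w => (innerSL ℝ (gradient V x)) w) y :=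
      (innerSL ℝ (gradient V x)).differentiableAt
    have : f = fun w => V w - (innerSL ℝ (gradient V x)) w := by
      funext w; simp [hf]
    rw [this, fderiv_fun_sub hVd hLd, (innerSL ℝ (gradient V x)).fderiv]
  have hgradeq : gradient V x = gradient V y := by
    apply ext_inner_right ℝ
    intro v
    have h3 : fderiv ℝ V y v = innerSL ℝ (gradient V x) v := by
      have := hfderiv
      rw [hfd] at this
      have := congrArg (fun (L : EuclideanSpace ℝ (Fin d) →L[ℝ] ℝ) => L v) this
      simp only [ContinuousLinearMap.sub_apply, ContinuousLinearMap.zero_apply] at this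
      linarith
    have h4 := inner_gradient_eq_fderiv V y v
    rw [h3] at h4
    simp only [innerSL_apply_apply] at h4
    exact h4.symm
  refine ⟨hgradeq, ?_⟩
  intro t ht
  obtain ⟨ht0, ht1⟩ := ht
  -- upper bound from convexity
  have hub : V (x + t • (y - x)) ≤ V x + t * (V y - V x) := by
    have := hconv.2 (Set.mem_univ x) (Set.mem_univ y)
      (by linarith : (0:ℝ) ≤ 1 - t) ht0 (by ring)
    have heq : (1 - t) • x + t • y = x + t • (y - x) := by
      simp [smul_sub, sub_smul]; abel
    rw [heq] at this
    have : V (x + t • (y - x)) ≤ (1 - t) * V x + t * V y := by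
      simpa [smul_eq_mul] using this
    linarith
  have hlb : V x + t * (V y - V x) ≤ V (x + t • (y - x)) := by
    have := grad_ineq V hconv hdiff x (x + t • (y - x))
    have hw : x + t • (y - x) - x = t • (y - x) := by abel
    rw [hw, real_inner_smul_right] at this
    have hVy : (inner ℝ (gradient V x) (y - x) : ℝ) = V y - V x := by linarith [hkey]
    rw [hVy] at this
    linarith
  linarith
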